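/- Fix 1 ≤ j ≤ n-2 and let A = [j-1] ∪ {j+1}. Every permutation σ ∈ S_n with σ(1)+...+σ(j) ≤ binom(j+1,2)+1 satisfies σ ≤ ←A·ω_A in the Bruhat order, where ←A·ω_A is the permutation whose one-line notation is j+1,j-1,j-2,...,1 followed by n,n-1,...,j+2,j. -/

import Mathlib

/-- Number of inversions (Coxeter length) of a permutation of `Fin n`. -/
def invCount {n : ℕ} (σ : Equiv.Perm (Fin n)) : ℕ :=
  ((Finset.univ : Finset (Fin n × Fin n)).filter
    (fun p => p.1 < p.2 ∧ σ p.2 < σ p.1)).card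

/-- Covering relation of the strong Bruhat order: multiply by a transposition
(on values) and increase the length by exactly one. -/
def BruhatCover {n : ℕ} (u v : Equiv.Perm (Fin n)) : Prop :=
  (∃ a b : Fin n, a ≠ b ∧ v = Equiv.swap a b * u) ∧ invCount v = invCount u + 1

/-- The strong Bruhat order on `Equiv.Perm (Fin n)`. -/
def BruhatLE {n : ℕ} : Equiv.Perm (Fin n) → Equiv.Perm (Fin n) → Prop :=
  Relation.ReflTransGen BruhatCover

/-- Sum of the first `j` one-line values of `σ` (values taken in `{1, …, n}`). -/
def firstSum {n : ℕ} (σ : Equiv.Perm (Fin n)) (j : ℕ) : ℕ :=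
  ∑ i ∈ Finset.univ.filter (fun i : Fin n => (i : ℕ) < j), ((σ i : ℕ) + 1)

lemma invCount_le {n : ℕ} (σ : Equiv.Perm (Fin n)) : invCount σ ≤ n * n := by
  calc invCount σ ≤ (Finset.univ : Finset (Fin n × Fin n)).card := Finset.card_filter_le _ _
  _ = n * n := by simp [Finset.card_univ]


lemma invCount_inv {n : ℕ} (σ : Equiv.Perm (Fin n)) : invCount σ⁻¹ = invCount σ := by
  unfold invCount
  apply Finset.card_bij' (fun p _ => (σ⁻¹ p.2, σ⁻¹ p.1)) (fun p _ => (σ p.2, σ p.1))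
  · intro a ha
    simp only [Finset.mem_filter, Finset.mem_univ, true_and] at ha ⊢
    simpa using ⟨ha.2, ha.1⟩
  · intro a ha
    simp only [Finset.mem_filter, Finset.mem_univ, true_and] at ha ⊢
    simpa using ⟨ha.2, ha.1⟩
  · intro a _; simp
  · intro a _; simp


lemma swap_val {n : ℕ} (a b x : Fin n) :
    ((Equiv.swap a b) x : ℕ) = if x = a then (b : ℕ) else if x = b then (a : ℕ) else (x : ℕ) := by
  rw [Equiv.swap_apply_def]; split_ifs <;> rfl


lemma swap_val' {n : ℕ} (a b x : Fin n) :
    ((Equiv.swap a b) x : ℕ) =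
      if (x:ℕ) = (a:ℕ) then (b : ℕ) else if (x:ℕ) = (b:ℕ) then (a : ℕ) else (x : ℕ) := by
  rw [swap_val]
  simp only [Fin.ext_iff]


lemma invCount_swap_mul {n : ℕ} (σ : Equiv.Perm (Fin n)) (a b : Fin n)
    (hab : (a : ℕ) + 1 = (b : ℕ)) (h : σ⁻¹ a < σ⁻¹ b) :
    invCount (Equiv.swap a b * σ) = invCount σ + 1 := by
  have key : ∀ x y : Fin n, ¬((x:ℕ) = a ∧ (y:ℕ) = b) → ¬((x:ℕ) = b ∧ (y:ℕ) = a) →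
      (Equiv.swap a b x < Equiv.swap a b y ↔ x < y) := by
    intro x y h1 h2
    rw [Fin.lt_def, Fin.lt_def, swap_val', swap_val']
    split_ifs <;> omega
  have hset : (Finset.univ : Finset (Fin n × Fin n)).filter
      (fun p => p.1 < p.2 ∧ (Equiv.swap a b * σ) p.2 < (Equiv.swap a b * σ) p.1)
      = insert (σ⁻¹ a, σ⁻¹ b) ((Finset.univ : Finset (Fin n × Fin n)).filter
      (fun p => p.1 < p.2 ∧ σ p.2 < σ p.1)) := by
    ext ⟨p, q⟩
    simp only [Finset.mem_filter, Finset.mem_insert, Finset.mem_univ, true_and]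
    simp only [Equiv.Perm.mul_apply, Prod.mk.injEq]
    by_cases hpa : σ p = a
    · have hp : p = σ⁻¹ a := by rw [← hpa]; simp
      by_cases hqb : σ q = b
      · have hq : q = σ⁻¹ b := by rw [← hqb]; simp
        subst hp hq
        constructor
        · intro _; exact Or.inl ⟨rfl, rfl⟩
        · intro _
          refine ⟨h, ?_⟩
          rw [hpa, hqb, Equiv.swap_apply_left, Equiv.swap_apply_right, Fin.lt_def]
          omega
      · have hne2 : ¬((σ q : ℕ) = a ∧ (σ p : ℕ) = b) := by
          intro ⟨_, hc⟩; rw [hpa] at hc; omega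
        have hne3 : ¬((σ q : ℕ) = b ∧ (σ p : ℕ) = a) := by
          intro ⟨hc, _⟩
          exact hqb (Fin.ext hc)
        rw [key _ _ hne2 hne3]
        constructor
        · intro hx; exact Or.inr hx
        · rintro (⟨h1, h2⟩ | hx)
          · exfalso; apply hqb; rw [h2]; simp
          · exact hx
    · have hne4 : ¬((σ q : ℕ) = b ∧ (σ p : ℕ) = a) := by
        intro ⟨_, hc⟩; exact hpa (Fin.ext hc)
      by_cases hpb : σ p = b
      · have hp : p = σ⁻¹ b := by rw [← hpb]; simp
        by_cases hqa : σ q = a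
        · have hq : q = σ⁻¹ a := by rw [← hqa]; simp
          subst hp hq
          have : ¬ (σ⁻¹ b < σ⁻¹ a) := asymm h
          constructor
          · intro ⟨hc, _⟩; exact absurd hc this
          · rintro (⟨h1, _⟩ | ⟨hc, _⟩)
            · exfalso
              have : σ (σ⁻¹ b) = σ (σ⁻¹ a) := by rw [h1]
              simp only [Equiv.Perm.inv_def, Equiv.apply_symm_apply] at this
              rw [Fin.ext_iff] at this; omega
            · exact absurd hc this
        · have hne2 : ¬((σ q : ℕ) = a ∧ (σ p : ℕ) = b) := by
            intro ⟨hc, _⟩; exact hqa (Fin.ext hc)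
          rw [key _ _ hne2 hne4]
          constructor
          · intro hx; exact Or.inr hx
          · rintro (⟨h1, h2⟩ | hx)
            · exfalso; apply hpa; rw [h1]; simp
            · exact hx
      · have hne2 : ¬((σ q : ℕ) = a ∧ (σ p : ℕ) = b) := by
          intro ⟨_, hc⟩; exact hpb (Fin.ext hc)
        rw [key _ _ hne2 hne4]
        constructor
        · intro hx; exact Or.inr hx
        · rintro (⟨h1, h2⟩ | hx)
          · exfalso; apply hpa; rw [h1]; simp
          · exact hx
  unfold invCount
  rw [hset, Finset.card_insert_of_notMem]
  simp only [Finset.mem_filter, Finset.mem_univ, true_and, not_and]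
  intro _
  simp only [Equiv.Perm.inv_def, Equiv.apply_symm_apply, Fin.lt_def, not_lt]
  omega


lemma invCount_mul_swap {n : ℕ} (σ : Equiv.Perm (Fin n)) (p q : Fin n)
    (hpq : (p : ℕ) + 1 = (q : ℕ)) (h : σ p < σ q) :
    invCount (σ * Equiv.swap p q) = invCount σ + 1 := by
  have h1 : invCount (σ * Equiv.swap p q) = invCount (Equiv.swap p q * σ⁻¹) := by
    rw [← invCount_inv (Equiv.swap p q * σ⁻¹)]
    congr 1
  rw [h1, invCount_swap_mul σ⁻¹ p q hpq (by simpa using h), invCount_inv]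


lemma bruhatCover_pos_swap {n : ℕ} (σ : Equiv.Perm (Fin n)) (p q : Fin n)
    (hpq : (p : ℕ) + 1 = (q : ℕ)) (h : σ p < σ q) :
    BruhatCover σ (σ * Equiv.swap p q) := by
  exact ⟨⟨σ p, σ q, ne_of_lt h, Equiv.mul_swap_eq_swap_mul σ p q⟩,
    invCount_mul_swap σ p q hpq h⟩


lemma firstSum_swap_head {n j : ℕ} (σ : Equiv.Perm (Fin n)) (p q : Fin n)
    (hp : (p : ℕ) < j) (hq : (q : ℕ) < j) :
    firstSum (σ * Equiv.swap p q) j = firstSum σ j := by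
  unfold firstSum
  refine Finset.sum_bij' (fun a _ => Equiv.swap p q a) (fun a _ => Equiv.swap p q a)
    ?_ ?_ ?_ ?_ ?_
  · intro a ha
    simp only [Finset.mem_filter, Finset.mem_univ, true_and] at ha ⊢
    rw [swap_val']
    split_ifs <;> omega
  · intro a ha
    simp only [Finset.mem_filter, Finset.mem_univ, true_and] at ha ⊢
    rw [swap_val']
    split_ifs <;> omega
  · intro a _; simp
  · intro a _; simp
  · intro a _; simp [Equiv.Perm.mul_apply]


lemma firstSum_swap_tail {n j : ℕ} (σ : Equiv.Perm (Fin n)) (p q : Fin n)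
    (hp : j ≤ (p : ℕ)) (hq : j ≤ (q : ℕ)) :
    firstSum (σ * Equiv.swap p q) j = firstSum σ j := by
  unfold firstSum
  apply Finset.sum_congr rfl
  intro a ha
  simp only [Finset.mem_filter, Finset.mem_univ, true_and] at ha
  have h1 : a ≠ p := by intro hc; subst hc; omega
  have h2 : a ≠ q := by intro hc; subst hc; omega
  simp [Equiv.Perm.mul_apply, Equiv.swap_apply_of_ne_of_ne h1 h2]


lemma chain_ge (s : ℕ → ℕ) (a b : ℕ) (hstep : ∀ k, a ≤ k → k < b → s (k+1) < s k) :
    ∀ k, a ≤ k → k ≤ b → s k + (k - a) ≤ s a := by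
  intro k
  induction k with
  | zero =>
    intro h1 _
    have : a = 0 := by omega
    subst this; omega
  | succ k ih =>
    intro h1 h2
    rcases Nat.lt_or_ge a (k+1) with hc | hc
    · have ha : a ≤ k := by omega
      have := hstep k ha (by omega)
      have := ih ha (by omega)
      omega
    · have : a = k + 1 := by omega
      subst this; omega


lemma firstSum_eq {n j : ℕ} (hjn : j ≤ n) (σ : Equiv.Perm (Fin n)) (t : ℕ → ℕ)
    (ht : ∀ i : Fin n, (i : ℕ) < j → (σ i : ℕ) = t (i : ℕ)) :
    firstSum σ j = ∑ i ∈ Finset.range j, (t i + 1) := by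
  unfold firstSum
  refine Finset.sum_bij' (fun (a : Fin n) _ => (a : ℕ))
    (fun a ha => (⟨a, lt_of_lt_of_le (Finset.mem_range.mp ha) hjn⟩ : Fin n)) ?_ ?_ ?_ ?_ ?_
  · intro a ha
    simp only [Finset.mem_filter, Finset.mem_univ, true_and] at ha
    exact Finset.mem_range.mpr ha
  · intro a ha
    simp only [Finset.mem_filter, Finset.mem_univ, true_and]
    exact Finset.mem_range.mp ha
  · intro a _; rfl
  · intro a _; rfl
  · intro a ha
    simp only [Finset.mem_filter, Finset.mem_univ, true_and] at ha
    rw [ht a ha]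


lemma gauss : ∀ j : ℕ, 2 * ∑ i ∈ Finset.range j, (j - i) = j * (j + 1) := by
  intro j
  induction j with
  | zero => simp
  | succ j ih =>
    rw [Finset.sum_range_succ]
    have h1 : ∑ i ∈ Finset.range j, (j + 1 - i) = (∑ i ∈ Finset.range j, (j - i)) + j := by
      have h2 : ∀ i ∈ Finset.range j, j + 1 - i = (j - i) + 1 := by
        intro i hi
        have := Finset.mem_range.mp hi
        omega
      rw [Finset.sum_congr rfl h2, Finset.sum_add_distrib, Finset.sum_const,
        Finset.card_range, smul_eq_mul, mul_one]
    have h3 : (j + 1) * (j + 1 + 1) = j * (j + 1) + 2 * (j + 1) := by ring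
    omega


set_option maxHeartbeats 2000000 in

lemma step {n j : ℕ} (hj : 1 ≤ j) (hjn : j + 2 ≤ n)
    (τmax : Equiv.Perm (Fin n))
    (hτmax : ∀ i : Fin n, (τmax i : ℕ) =
      if (i : ℕ) = 0 then j
      else if (i : ℕ) < j then j - 1 - (i : ℕ)
      else if (i : ℕ) < n - 1 then n + j - 1 - (i : ℕ)
      else j - 1)
    (σ : Equiv.Perm (Fin n)) (hσ : firstSum σ j ≤ j * (j + 1) / 2 + 1)
    (hne : σ ≠ τmax) :
    ∃ v, BruhatCover σ v ∧ firstSum v j ≤ j * (j + 1) / 2 + 1 := by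
  by_cases hA : ∃ p q : Fin n, (p : ℕ) + 1 = (q : ℕ) ∧ (q : ℕ) < j ∧ σ p < σ q
  · obtain ⟨p, q, h1, h2, h3⟩ := hA
    exact ⟨σ * Equiv.swap p q, bruhatCover_pos_swap σ p q h1 h3,
      by rw [firstSum_swap_head σ p q (by omega) h2]; exact hσ⟩
  by_cases hB : ∃ p q : Fin n, (p : ℕ) + 1 = (q : ℕ) ∧ j ≤ (p : ℕ) ∧ σ p < σ q
  · obtain ⟨p, q, h1, h2, h3⟩ := hB
    exact ⟨σ * Equiv.swap p q, bruhatCover_pos_swap σ p q h1 h3,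
      by rw [firstSum_swap_tail σ p q h2 (by omega)]; exact hσ⟩
  push_neg at hA hB
  set s : ℕ → ℕ := fun i => if h : i < n then ((σ ⟨i, h⟩ : Fin n) : ℕ) else 0 with hsdef
  have hsval : ∀ (i : ℕ) (h : i < n), s i = (σ ⟨i, h⟩ : ℕ) := fun i h => dif_pos h
  have hslt : ∀ (i : ℕ) (h : i < n), s i < n := fun i h => by
    rw [hsval i h]; exact (σ ⟨i, h⟩).isLt
  have hinj : ∀ k l, k < n → l < n → s k = s l → k = l := by
    intro k l hk hl he
    rw [hsval k hk, hsval l hl] at he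
    have := σ.injective (Fin.ext he)
    simpa using this
  have hd : ∀ k, k + 1 < j → s (k + 1) < s k := by
    intro k hk
    have hk1 : k + 1 < n := by omega
    have hkn : k < n := by omega
    have h1 := hA ⟨k, hkn⟩ ⟨k + 1, hk1⟩ rfl hk
    rw [Fin.le_def] at h1
    have h2 : s (k + 1) ≠ s k := fun he => by have := hinj _ _ hk1 hkn he; omega
    rw [hsval k hkn, hsval _ hk1]
    rw [hsval k hkn, hsval _ hk1] at h2
    omega
  have ht : ∀ k, j ≤ k → k + 1 < n → s (k + 1) < s k := by
    intro k hk hk1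
    have hkn : k < n := by omega
    have h1 := hB ⟨k, hkn⟩ ⟨k + 1, hk1⟩ rfl hk
    rw [Fin.le_def] at h1
    have h2 : s (k + 1) ≠ s k := fun he => by have := hinj _ _ hk1 hkn he; omega
    rw [hsval k hkn, hsval _ hk1]
    rw [hsval k hkn, hsval _ hk1] at h2
    omega
  have hub0 : ∀ k, k < j → s k + k ≤ s 0 := by
    intro k hk
    have := chain_ge s 0 (j - 1) (fun m _ hm2 => hd m (by omega)) k (by omega) (by omega)
    omega
  have hlb : ∀ k, k < j → j - 1 - k ≤ s k := by
    intro k hk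
    have := chain_ge s k (j - 1) (fun m hm1 hm2 => hd m (by omega)) (j - 1) (by omega)
      (le_refl _)
    omega
  have hfs : firstSum σ j = ∑ i ∈ Finset.range j, (s i + 1) :=
    firstSum_eq (by omega) σ s (fun i _ => by rw [hsval _ i.isLt, Fin.eta])
  have hpeel : ∑ i ∈ Finset.range j, (s i + 1)
      = (∑ i ∈ Finset.range (j - 1), (s (i + 1) + 1)) + (s 0 + 1) := by
    have h0 := Finset.sum_range_succ' (fun i => s i + 1) (j - 1)
    rw [(by omega : j - 1 + 1 = j)] at h0
    exact h0
  have hrest_lb : ∀ i ∈ Finset.range (j - 1), (j - 1 - (i + 1)) + 1 ≤ s (i + 1) + 1 := by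
    intro i hi
    have := hlb (i + 1) (by have := Finset.mem_range.mp hi; omega)
    omega
  have hsum_lb : ∑ i ∈ Finset.range (j - 1), ((j - 1 - (i + 1)) + 1)
      ≤ ∑ i ∈ Finset.range (j - 1), (s (i + 1) + 1) := Finset.sum_le_sum hrest_lb
  have hgsum : ∑ i ∈ Finset.range (j - 1), ((j - 1 - (i + 1)) + 1)
      = ∑ i ∈ Finset.range (j - 1), ((j - 1) - i) := by
    apply Finset.sum_congr rfl
    intro i hi
    have := Finset.mem_range.mp hi
    omega
  have hg1 := gauss (j - 1)
  have e1 : (j - 1) * ((j - 1) + 1) + 2 * j = j * (j + 1) := by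
    obtain ⟨m, rfl⟩ : ∃ m, j = m + 1 := ⟨j - 1, by omega⟩
    simp
    ring
  have hh := hσ
  rw [hfs, hpeel] at hh
  have hs0ub : s 0 ≤ j := by omega
  have hs0lb : j - 1 ≤ s 0 := by have := hlb 0 hj; omega
  rcases (by omega : s 0 = j - 1 ∨ s 0 = j) with hcase | hcase
  · -- type I head: build the special cover, producing τmax-like firstSum bound
    have hHead : ∀ k, k < j → s k = j - 1 - k := by
      intro k hk
      have := hub0 k hk
      have := hlb k hk
      omega
    have htail0 : ∀ k, j ≤ k → k < n → j ≤ s k := by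
      intro k h1 h2
      by_contra hc
      push_neg at hc
      have hi : j - 1 - s k < j := by omega
      have h3 := hHead (j - 1 - s k) hi
      have heq : s (j - 1 - s k) = s k := by omega
      have := hinj _ _ (by omega) h2 heq
      omega
    have hTail : ∀ k, j ≤ k → k < n → s k = n + j - 1 - k := by
      intro k h1 h2
      have hlo := chain_ge s k (n - 1) (fun m hm1 hm2 => ht m (by omega) (by omega))
        (n - 1) (by omega) (by omega)
      have hlo2 := htail0 (n - 1) (by omega) (by omega)
      have hhi := chain_ge s j k (fun m hm1 hm2 => ht m hm1 (by omega)) k h1 (le_refl _)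
      have := hslt j (by omega)
      omega
    have hj1n : j - 1 < n := by omega
    have hjn' : j < n := by omega
    have hσ0 : σ ⟨0, by omega⟩ = (⟨j - 1, hj1n⟩ : Fin n) := by
      apply Fin.ext
      rw [← hsval 0 (by omega)]
      exact hcase
    have hσn : σ ⟨n - 1, by omega⟩ = (⟨j, hjn'⟩ : Fin n) := by
      apply Fin.ext
      rw [← hsval (n - 1) (by omega), hTail (n - 1) (by omega) (by omega)]
      show n + j - 1 - (n - 1) = j
      omega
    have hia : σ⁻¹ (⟨j - 1, hj1n⟩ : Fin n) = ⟨0, by omega⟩ := by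
      rw [Equiv.Perm.inv_eq_iff_eq]
      exact hσ0.symm
    have hib : σ⁻¹ (⟨j, hjn'⟩ : Fin n) = ⟨n - 1, by omega⟩ := by
      rw [Equiv.Perm.inv_eq_iff_eq]
      exact hσn.symm
    have hab : ((⟨j - 1, hj1n⟩ : Fin n) : ℕ) + 1 = ((⟨j, hjn'⟩ : Fin n) : ℕ) := by
      show j - 1 + 1 = j
      omega
    have habne : (⟨j - 1, hj1n⟩ : Fin n) ≠ (⟨j, hjn'⟩ : Fin n) := by
      simp only [ne_eq, Fin.mk.injEq]
      omega
    have hlt2 : σ⁻¹ (⟨j - 1, hj1n⟩ : Fin n) < σ⁻¹ (⟨j, hjn'⟩ : Fin n) := by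
      simp only [hia, hib]
      exact Fin.mk_lt_mk.mpr (by omega)
    have hcov : BruhatCover σ (Equiv.swap (⟨j - 1, hj1n⟩ : Fin n) (⟨j, hjn'⟩ : Fin n) * σ) :=
      ⟨⟨_, _, habne, rfl⟩, invCount_swap_mul σ _ _ hab hlt2⟩
    refine ⟨_, hcov, ?_⟩
    have hfsv : firstSum (Equiv.swap (⟨j - 1, hj1n⟩ : Fin n) (⟨j, hjn'⟩ : Fin n) * σ) j
        = ∑ i ∈ Finset.range j, ((if i = 0 then j else j - 1 - i) + 1) := by
      apply firstSum_eq (by omega)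
      intro i hi
      rw [Equiv.Perm.mul_apply, swap_val']
      have hsi : (σ i : ℕ) = s (i : ℕ) := by rw [hsval _ i.isLt, Fin.eta]
      rw [hsi]
      show (if s (i : ℕ) = j - 1 then j else if s (i : ℕ) = j then j - 1 else s (i : ℕ))
        = if (i : ℕ) = 0 then j else j - 1 - (i : ℕ)
      rcases Nat.eq_zero_or_pos (i : ℕ) with h0 | h0
      · rw [h0, hcase, if_pos rfl, if_pos rfl]
      · rw [hHead _ hi, if_neg (by omega), if_neg (by omega), if_neg (by omega)]
    rw [hfsv]
    have hsplit : ∑ i ∈ Finset.range j, ((if i = 0 then j else j - 1 - i) + 1)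
        = (∑ i ∈ Finset.range (j - 1), (j - 1 - (i + 1) + 1)) + (j + 1) := by
      have h0 := Finset.sum_range_succ' (fun i => (if i = 0 then j else j - 1 - i) + 1) (j - 1)
      rw [(by omega : j - 1 + 1 = j)] at h0
      rw [h0]
      congr 1
    rw [hsplit, hgsum]
    omega
  · -- type II head: σ must equal τmax, contradiction
    exfalso
    have hpin : ∀ i ∈ Finset.range (j - 1), s (i + 1) + 1 = (j - 1 - (i + 1)) + 1 := by
      intro i hi
      by_contra hne2
      have hstrict : (j - 1 - (i + 1)) + 1 < s (i + 1) + 1 := by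
        have := hlb (i + 1) (by have := Finset.mem_range.mp hi; omega)
        omega
      have hlt := Finset.sum_lt_sum hrest_lb ⟨i, hi, hstrict⟩
      omega
    have hHead2 : ∀ k, 1 ≤ k → k < j → s k = j - 1 - k := by
      intro k h1 h2
      have h3 := hpin (k - 1) (Finset.mem_range.mpr (by omega))
      rw [(by omega : k - 1 + 1 = k)] at h3
      omega
    have hexcl : ∀ k, j ≤ k → k < n → s k = j - 1 ∨ j + 1 ≤ s k := by
      intro k h1 h2
      by_cases hc1 : s k < j - 1
      · exfalso
        have h3 := hHead2 (j - 1 - s k) (by omega) (by omega)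
        have heq : s (j - 1 - s k) = s k := by omega
        have := hinj _ _ (by omega) h2 heq
        omega
      by_cases hc2 : s k = j
      · exfalso
        have : k = 0 := hinj k 0 h2 (by omega) (by omega)
        omega
      · omega
    have hn2 : j + 1 ≤ s (n - 2) := by
      by_contra hc
      have h1 := hexcl (n - 2) (by omega) (by omega)
      have h2 := ht (n - 2) (by omega) (by omega)
      rw [(by omega : n - 2 + 1 = n - 1)] at h2
      have h3 := hexcl (n - 1) (by omega) (by omega)
      omega
    have hTail2 : ∀ k, j ≤ k → k ≤ n - 2 → s k = n + j - 1 - k := by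
      intro k h1 h2
      have hlo := chain_ge s k (n - 2) (fun m hm1 hm2 => ht m (by omega) (by omega))
        (n - 2) (by omega) (by omega)
      have hhi := chain_ge s j k (fun m hm1 hm2 => ht m hm1 (by omega)) k h1 (le_refl _)
      have := hslt j (by omega)
      omega
    have hlast : s (n - 1) = j - 1 := by
      have h2 := ht (n - 2) (by omega) (by omega)
      rw [(by omega : n - 2 + 1 = n - 1)] at h2
      have h1 := hTail2 (n - 2) (by omega) (le_refl _)
      have h3 := hexcl (n - 1) (by omega) (by omega)
      omega
    apply hne
    refine Equiv.ext fun i => Fin.ext ?_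
    rw [hτmax i]
    have hsi : (σ i : ℕ) = s (i : ℕ) := by rw [hsval _ i.isLt, Fin.eta]
    rw [hsi]
    have hin := i.isLt
    split_ifs with h1 h2 h3
    · rw [h1]; exact hcase
    · exact hHead2 _ (by omega) h2
    · exact hTail2 _ (by omega) (by omega)
    · rw [(by omega : (i : ℕ) = n - 1)]; exact hlast


theorem max_perm_below_hyperplane (n j : ℕ) (hj : 1 ≤ j) (hjn : j + 2 ≤ n)
    (τmax : Equiv.Perm (Fin n))
    (hτmax : ∀ i : Fin n, (τmax i : ℕ) =
      if (i : ℕ) = 0 then j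
      else if (i : ℕ) < j then j - 1 - (i : ℕ)
      else if (i : ℕ) < n - 1 then n + j - 1 - (i : ℕ)
      else j - 1)
    (σ : Equiv.Perm (Fin n)) (hσ : firstSum σ j ≤ j * (j + 1) / 2 + 1) :
    BruhatLE σ τmax := by
  have key : ∀ k (σ : Equiv.Perm (Fin n)), firstSum σ j ≤ j * (j + 1) / 2 + 1 →
      n * n + 1 - invCount σ ≤ k → BruhatLE σ τmax := by
    intro k
    induction k with
    | zero =>
      intro σ hσ' hk
      exact absurd hk (by have := invCount_le σ; omega)
    | succ k ih =>
      intro σ hσ' hk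
      by_cases he : σ = τmax
      · subst he; exact Relation.ReflTransGen.refl
      · obtain ⟨v, hcov, hv⟩ := step hj hjn τmax hτmax σ hσ' he
        have hinc := hcov.2
        have := invCount_le v
        exact Relation.ReflTransGen.head hcov (ih v hv (by omega))
  exact key (n * n + 1) σ hσ (by omega)
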